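/- arXiv:0810.5032 — 2 statements merged into one kernel-verified Lean document; each statement's English description precedes it below -/
import Mathlib

section
/- Let p be a prime, n ≥ 1 and m ≥ 1 natural numbers, and let w : Fin n → ℕ be the weight function w(i) = 2·p^i. If f is a multivariate polynomial in MvPolynomial (Fin n) (ZMod p) such that (1) every monomial in the support of f has all exponents ≤ p − 1, and (2) f is weighted homogeneous of weighted degree m·(2·p^n − 2) + 2 with respect to w, then f = 0. (This is the paper's Lemma 'noobinrightdeg': in the truncated polynomial algebra P_p(δτ̄_0,…,δτ̄_{n−1}) with deg δτ̄_i = 2p^i there are no nonzero elements in the degree m·q + 2 where the k-invariant of k(n) lives, since the top degree 2p^n − 2 is smaller.) -/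
lemma aux_geom (p : ℕ) (hp : 1 ≤ p) (n : ℕ) :
    ∑ i ∈ Finset.range n, (p - 1) * (2 * p ^ i) = 2 * p ^ n - 2 := by
  induction n with
  | zero => simp
  | succ n ih =>
    rw [Finset.sum_range_succ, ih]
    have h1 : 1 ≤ p ^ n := Nat.one_le_pow n p (by omega)
    have : p ^ (n + 1) = p * p ^ n := pow_succ' p n
    rw [this]
    zify [h1, hp, Nat.le_mul_of_pos_right 2 (by omega : 0 < p ^ n),
      show (2:ℕ) ≤ 2 * (p * p ^ n) by nlinarith]
    ring

/-- In the truncated polynomial algebra `P_p(δτ̄_0, …, δτ̄_{n-1})` with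
`deg δτ̄_i = 2p^i`, there are no nonzero elements in weighted degree
`m * (2p^n - 2) + 2` for `m ≥ 1`. -/
theorem stmt_1 (p n m : ℕ) (hp : p.Prime) (hn : 1 ≤ n) (hm : 1 ≤ m)
    (f : MvPolynomial (Fin n) (ZMod p))
    (h1 : ∀ μ ∈ f.support, ∀ i : Fin n, μ i ≤ p - 1)
    (h2 : ∀ μ ∈ f.support,
      ∑ i : Fin n, μ i * (2 * p ^ (i : ℕ)) = m * (2 * p ^ n - 2) + 2) :
    f = 0 := by
  by_contra hf
  obtain ⟨μ, hμ⟩ := (MvPolynomial.support_nonempty.mpr hf)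
  have hle : ∑ i : Fin n, μ i * (2 * p ^ (i : ℕ)) ≤ 2 * p ^ n - 2 := by
    calc ∑ i : Fin n, μ i * (2 * p ^ (i : ℕ))
        ≤ ∑ i : Fin n, (p - 1) * (2 * p ^ (i : ℕ)) :=
          Finset.sum_le_sum fun i _ => Nat.mul_le_mul_right _ (h1 μ hμ i)
      _ = ∑ i ∈ Finset.range n, (p - 1) * (2 * p ^ i) :=
          Fin.sum_univ_eq_sum_range (fun i => (p - 1) * (2 * p ^ i)) n
      _ = 2 * p ^ n - 2 := aux_geom p hp.one_lt.le n
  have heq := h2 μ hμ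
  have hq : 2 ≤ 2 * p ^ n := by
    have : 2 ≤ p ^ n := by
      calc 2 ≤ p := hp.two_le
        _ ≤ p ^ n := Nat.le_self_pow (by omega) p
    omega
  have : 2 * p ^ n - 2 ≤ m * (2 * p ^ n - 2) := Nat.le_mul_of_pos_left _ hm
  omega
end

section
/- Let p be a prime, n ≥ 1, let ℤ_p denote the ring of p-adic integers, let R = MvPolynomial (Fin n) ℤ_p be the polynomial ring ℤ_p[v_1,…,v_n], and let k = ZMod p be regarded as an R-module via the ring homomorphism R → ZMod p sending each variable v_i to 0 and reducing constants modulo p. Then for every j ≥ 0, the abelian group Tor_j^R(k, k) has cardinality p^(binom(n+1, j)); in particular it vanishes for j > n + 1. (This is the additive content of the paper's Proposition computing H_*^{BP⟨n⟩_p}(H𝔽_p; 𝔽_p) ≅ Λ_{𝔽_p}(α_0, …, α_n), an exterior algebra on n + 1 generators.) -/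
open CategoryTheory

noncomputable section KoszulCore

universe u
variable {R : Type u} [CommRing R]

/-- Degree-`j` module of the recursive Koszul complex on a list. -/
def KM (R : Type u) [CommRing R] : List R → ℕ → ModuleCat.{u} R
  | [], 0 => ModuleCat.of R R
  | [], _+1 => ModuleCat.of R PUnit
  | _::xs, 0 => KM R xs 0
  | _::xs, j+1 => ModuleCat.of R (KM R xs (j+1) × KM R xs j)

/-- The Koszul differential. -/
def dK : ∀ (xs : List R) (j : ℕ), KM R xs (j+1) ⟶ KM R xs j
  | [], _ => 0
  | x::xs, 0 =>
      ModuleCat.ofHom (LinearMap.coprod (dK xs 0).hom (x • LinearMap.id) :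
        (KM R xs 1 × KM R xs 0) →ₗ[R] KM R xs 0)
  | x::xs, j+1 =>
      ModuleCat.ofHom (LinearMap.prod (LinearMap.coprod (dK xs (j+1)).hom (x • LinearMap.id))
        (-((dK xs j).hom ∘ₗ LinearMap.snd R (KM R xs (j+2)) (KM R xs (j+1)))) :
        (KM R xs (j+2) × KM R xs (j+1)) →ₗ[R] (KM R xs (j+1) × KM R xs j))

lemma dK_cons_zero (x : R) (xs : List R) (a : KM R xs 1) (b : KM R xs 0) :
    dK (x::xs) 0 (show KM R (x::xs) 1 from (a, b)) = dK xs 0 a + x • b := rfl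

lemma dK_cons_succ (x : R) (xs : List R) (j : ℕ) (a : KM R xs (j+2)) (b : KM R xs (j+1)) :
    dK (x::xs) (j+1) (show KM R (x::xs) (j+2) from (a, b)) =
      (show KM R (x::xs) (j+1) from (dK xs (j+1) a + x • b, -(dK xs j b))) := rfl

lemma dK_sq (xs : List R) (j : ℕ) :
    dK xs (j+1) ≫ dK xs j = 0 := by
  induction xs generalizing j with
  | nil => show (0 : KM R [] (j+2) ⟶ _) ≫ (0 : KM R [] (j+1) ⟶ _) = 0; simp
  | cons x xs ih =>
      apply ModuleCat.hom_ext; apply LinearMap.ext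
      rintro ⟨a, b⟩
      cases j with
      | zero =>
          have := ConcreteCategory.congr_hom (ih 0) a
          simp only [ModuleCat.hom_comp, ModuleCat.comp_apply, LinearMap.comp_apply] at this ⊢
          show dK xs 0 (dK xs 1 a + x • b) + x • (-(dK xs 0 b)) = 0
          simp [map_add, this]
      | succ j =>
          have h1 := ConcreteCategory.congr_hom (ih (j+1)) a
          have h2 := ConcreteCategory.congr_hom (ih j) b
          simp only [ModuleCat.hom_comp, ModuleCat.comp_apply, LinearMap.comp_apply] at h1 h2 ⊢
          show (show KM R (x::xs) (j+1) from
            (dK xs (j+1) (dK xs (j+2) a + x • b) + x • (-(dK xs (j+1) b)),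
             -(dK xs j (-(dK xs (j+1) b))))) = 0
          rw [map_add, h1]
          show ((0 : KM R xs (j+1)) + _ + _, _) = (0,0)
          refine Prod.ext ?_ ?_ <;> simp [h2, map_smul]

end KoszulCore

noncomputable section KoszulCore2
universe v
variable {R : Type v} [CommRing R]

lemma dK_pair_zero (x : R) (xs : List R) (a : KM R xs 1) (b : KM R xs 0) :
    dK (x::xs) 0 ((a, b) : (KM R xs 1 × KM R xs 0)) = dK xs 0 a + x • b := rfl

lemma dK_pair_succ (x : R) (xs : List R) (j : ℕ) (a : KM R xs (j+2)) (b : KM R xs (j+1)) :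
    dK (x::xs) (j+1) ((a, b) : (KM R xs (j+2) × KM R xs (j+1))) =
      ((dK xs (j+1) a + x • b, -(dK xs j b)) : (KM R xs (j+1) × KM R xs j)) := rfl

/-- Augmentation identification `K₀ ≅ R`. -/
def epsK : ∀ xs : List R, (KM R xs 0 : Type v) ≃ₗ[R] R
  | [] => LinearEquiv.refl R R
  | _::xs => epsK xs

/-- ideal generated by a list -/
def sIdeal (xs : List R) : Ideal R := Ideal.span {r : R | r ∈ xs}

lemma sIdeal_cons (x : R) (xs : List R) : sIdeal (x::xs) = Ideal.span (insert x {r : R | r ∈ xs}) := by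
  unfold sIdeal
  congr 1
  ext r
  simp

lemma sIdeal_le_cons (x : R) (xs : List R) : sIdeal xs ≤ sIdeal (x::xs) := by
  rw [sIdeal_cons]
  exact Ideal.span_mono (Set.subset_insert _ _)

lemma mem_sIdeal_cons (x : R) (xs : List R) (r : R) :
    r ∈ sIdeal (x::xs) ↔ ∃ a z, z ∈ sIdeal xs ∧ r = a * x + z := by
  rw [sIdeal_cons, Ideal.mem_span_insert]
  simp [sIdeal]

lemma epsK_dK_mem (xs : List R) (a : KM R xs 1) :
    epsK xs (dK xs 0 a) ∈ sIdeal xs := by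
  induction xs with
  | nil =>
      rw [show dK ([]:List R) 0 a = 0 from rfl, map_zero]
      exact zero_mem _
  | cons x xs ih =>
      obtain ⟨a, b⟩ := (a : (KM R xs 1 × KM R xs 0))
      show epsK xs (dK (x::xs) 0 ((a, b) : (KM R xs 1 × KM R xs 0))) ∈ sIdeal (x::xs)
      rw [dK_pair_zero, map_add, map_smul]
      refine add_mem (sIdeal_le_cons x xs (ih a)) ?_
      rw [mem_sIdeal_cons]
      exact ⟨epsK xs b, 0, zero_mem _, by rw [smul_eq_mul]; ring⟩

lemma exists_dK_of_mem (xs : List R) (b : KM R xs 0) (hb : epsK xs b ∈ sIdeal xs) :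
    ∃ a : KM R xs 1, dK xs 0 a = b := by
  induction xs with
  | nil =>
      refine ⟨0, ?_⟩
      simp only [sIdeal, List.not_mem_nil] at hb
      rw [show {r : R | False} = (∅ : Set R) by ext; simp, Ideal.span_empty] at hb
      have : b = 0 := by
        apply (epsK ([] : List R)).injective
        rw [map_zero]
        simpa using hb
      rw [this, map_zero]
  | cons x xs ih =>
      rw [show epsK (x::xs) b = epsK xs b from rfl, mem_sIdeal_cons] at hb
      obtain ⟨r, z, hz, hrz⟩ := hb
      obtain ⟨a, ha⟩ := ih ((id (α := (KM R xs 0 : Type v)) b) - x • (epsK xs).symm r) (by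
        rw [map_sub, map_smul, LinearEquiv.apply_symm_apply, smul_eq_mul]
        rw [show epsK xs (id (α := (KM R xs 0 : Type v)) b) = r * x + z from hrz]
        have : r * x + z - x * r = z := by ring
        rw [this]; exact hz)
      refine ⟨((a, (epsK xs).symm r) : (KM R xs 1 × KM R xs 0)), ?_⟩
      rw [dK_pair_zero, ha]
      show (id (α := (KM R xs 0 : Type v)) b) - x • (epsK xs).symm r
          + x • (epsK xs).symm r = (id (α := (KM R xs 0 : Type v)) b)
      abel

/-- regularity hypothesis for a list -/
def RegL : List R → Prop
  | [] => True
  | x :: xs => (∀ r : R, x * r ∈ sIdeal xs → r ∈ sIdeal xs) ∧ RegL xs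

lemma exactK (xs : List R) (hreg : RegL xs) (j : ℕ) (z : KM R xs (j+1))
    (hz : dK xs j z = 0) : ∃ w : KM R xs (j+2), dK xs (j+1) w = z := by
  induction xs generalizing j with
  | nil =>
      haveI : Subsingleton (KM R ([]:List R) (j+1) : Type v) :=
        ⟨fun a b => rfl⟩
      exact ⟨0, Subsingleton.elim _ _⟩
  | cons x xs ih =>
      obtain ⟨hx, hxs⟩ := hreg
      obtain ⟨a, b⟩ := (z : (KM R xs (j+1) × KM R xs j))
      cases j with
      | zero =>
          have h1 : dK xs 0 a + x • b = 0 := by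
            rw [dK_pair_zero] at hz
            exact hz
          have hmem : x * epsK xs b ∈ sIdeal xs := by
            have h3 := congrArg (epsK xs) h1
            rw [map_add, map_smul, map_zero, smul_eq_mul] at h3
            have h4 : x * epsK xs b = -(epsK xs (dK xs 0 a)) := by
              linear_combination h3
            rw [h4]
            exact neg_mem (epsK_dK_mem xs a)
          obtain ⟨c, hc⟩ := exists_dK_of_mem xs (-b) (by
            rw [map_neg]
            exact neg_mem (hx _ hmem))
          obtain ⟨u, hu⟩ := ih hxs 0 (a - x • c) (by
            rw [map_sub, map_smul, hc, smul_neg,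
              eq_neg_of_add_eq_zero_left h1]
            abel)
          refine ⟨((u, c) : (KM R xs 2 × KM R xs 1)), ?_⟩
          rw [dK_pair_succ, hu, hc]
          show ((a - x • c + x • c, - -b) : (KM R xs 1 × KM R xs 0)) =
            ((a, b) : (KM R xs 1 × KM R xs 0))
          rw [sub_add_cancel, neg_neg]
      | succ j =>
          rw [dK_pair_succ] at hz
          have h1 : dK xs (j+1) a + x • b = 0 :=
            congrArg (Prod.fst : ((KM R xs (j+1) : Type v) × (KM R xs j : Type v)) → _) hz
          have h2 : dK xs j b = 0 := by
            have h5 : -(dK xs j b) = (0 : (KM R xs j : Type v)) :=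
              congrArg (Prod.snd : ((KM R xs (j+1) : Type v) × (KM R xs j : Type v)) → _) hz
            rw [← neg_neg (dK xs j b), h5, neg_zero]
          obtain ⟨c, hc⟩ := ih hxs j (-b) (by rw [map_neg, h2, neg_zero])
          obtain ⟨u, hu⟩ := ih hxs (j+1) (a - x • c) (by
            rw [map_sub, map_smul, hc, smul_neg,
              eq_neg_of_add_eq_zero_left h1]
            abel)
          refine ⟨((u, c) : (KM R xs (j+3) × KM R xs (j+2))), ?_⟩
          rw [dK_pair_succ, hu, hc]
          show ((a - x • c + x • c, - -b) : (KM R xs (j+2) × KM R xs (j+1))) =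
            ((a, b) : (KM R xs (j+2) × KM R xs (j+1)))
          rw [sub_add_cancel, neg_neg]

end KoszulCore2

noncomputable section KoszulComplex
universe w
variable {R : Type w} [CommRing R]

/-- The Koszul chain complex of a list. -/
def KC (xs : List R) : ChainComplex (ModuleCat.{w} R) ℕ :=
  ChainComplex.of (fun j => KM R xs j) (fun j => dK xs j) (fun j => dK_sq xs j)

lemma KC_d (xs : List R) (j : ℕ) : (KC xs).d (j+1) j = dK xs j :=
  ChainComplex.of_d _ _ _

def freeKM : ∀ (xs : List R) (j : ℕ), Module.Free R (KM R xs j)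
  | [], 0 => inferInstanceAs (Module.Free R R)
  | [], _+1 => inferInstanceAs (Module.Free R PUnit.{w+1})
  | _::xs, 0 => freeKM xs 0
  | _::xs, j+1 =>
      letI := freeKM xs (j+1); letI := freeKM xs j
      inferInstanceAs (Module.Free R ((KM R xs (j+1) : Type w) × (KM R xs j : Type w)))

lemma projectiveKM (xs : List R) (j : ℕ) : Projective (KM R xs j) := by
  letI := freeKM xs j
  letI : Module.Projective R (KM R xs j) := inferInstance
  exact (IsProjective.iff_projective (KM R xs j)).mp this

lemma subsingletonKM : ∀ (xs : List R) (j : ℕ), xs.length < j →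
    Subsingleton (KM R xs j : Type w)
  | [], j+1, _ => ⟨fun a b => rfl⟩
  | x::xs, j+1, h => by
      haveI := subsingletonKM xs (j+1) (by simpa using Nat.lt_of_succ_lt h)
      haveI := subsingletonKM xs j (by exact Nat.lt_of_succ_lt_succ h)
      exact inferInstanceAs (Subsingleton ((KM R xs (j+1) : Type w) × (KM R xs j : Type w)))

lemma KC_exactAt (xs : List R) (hreg : RegL xs) (j : ℕ) :
    (KC xs).ExactAt (j+1) := by
  rw [HomologicalComplex.exactAt_iff' _ (j+1+1) (j+1) j (by simp) (by simp)]
  rw [ShortComplex.moduleCat_exact_iff]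
  intro z hz
  have hz' : dK xs j z = 0 := by
    rw [show (HomologicalComplex.sc' (KC xs) (j+1+1) (j+1) j).g = (KC xs).d (j+1) j from rfl,
      KC_d] at hz
    exact hz
  obtain ⟨w, hw⟩ := exactK xs hreg j z hz'
  exact ⟨w, by
    rw [show (HomologicalComplex.sc' (KC xs) (j+1+1) (j+1) j).f = (KC xs).d (j+2) (j+1) from rfl,
      KC_d]
    exact hw⟩

lemma prod_mem_smul {M N : Type w} [AddCommGroup M] [Module R M] [AddCommGroup N] [Module R N]
    {I : Ideal R} {u : M} {w : N}
    (hu : u ∈ I • (⊤ : Submodule R M)) (hw : w ∈ I • (⊤ : Submodule R N)) :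
    (u, w) ∈ I • (⊤ : Submodule R (M × N)) := by
  have h1 : ((u, (0 : N)) : M × N) ∈ I • (⊤ : Submodule R (M × N)) := by
    refine Submodule.smul_induction_on hu (fun r hr m _ => ?_) (fun a b ha hb => ?_)
    · have : ((r • m, (0 : N)) : M × N) = r • ((m, 0) : M × N) := by
        simp
      rw [this]
      exact Submodule.smul_mem_smul hr Submodule.mem_top
    · have : ((a + b, (0 : N)) : M × N) = (a, (0:N)) + (b, (0:N)) := by simp
      rw [this]
      exact add_mem ha hb
  have h2 : (((0 : M), w) : M × N) ∈ I • (⊤ : Submodule R (M × N)) := by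
    refine Submodule.smul_induction_on hw (fun r hr m _ => ?_) (fun a b ha hb => ?_)
    · have : (((0 : M), r • m) : M × N) = r • ((0, m) : M × N) := by simp
      rw [this]
      exact Submodule.smul_mem_smul hr Submodule.mem_top
    · have : (((0:M), a + b) : M × N) = ((0:M), a) + ((0:M), b) := by simp
      rw [this]
      exact add_mem ha hb
  have : ((u, w) : M × N) = (u, (0:N)) + ((0:M), w) := by simp
  rw [this]
  exact add_mem h1 h2

lemma dK_mem_smul (I : Ideal R) (xs : List R) (hxs : ∀ x ∈ xs, x ∈ I) :
    ∀ (j : ℕ) (m : KM R xs (j+1)),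
      dK xs j m ∈ I • (⊤ : Submodule R (KM R xs j)) := by
  induction xs with
  | nil =>
      intro j m
      rw [show dK ([] : List R) j m = 0 from rfl]
      exact zero_mem _
  | cons x xs ih =>
      have hx : x ∈ I := hxs x List.mem_cons_self
      have hxs' : ∀ y ∈ xs, y ∈ I := fun y hy => hxs y (List.mem_cons_of_mem _ hy)
      intro j m
      obtain ⟨a, b⟩ := (m : (KM R xs (j+1) × KM R xs j))
      cases j with
      | zero =>
          rw [dK_pair_zero]
          exact add_mem (ih hxs' 0 a) (Submodule.smul_mem_smul hx Submodule.mem_top)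
      | succ j =>
          rw [dK_pair_succ]
          exact prod_mem_smul
            (add_mem (ih hxs' (j+1) a) (Submodule.smul_mem_smul hx Submodule.mem_top))
            (neg_mem (ih hxs' j b))

end KoszulComplex

noncomputable section Specialize

open MvPolynomial

variable (p : ℕ) [Fact p.Prime] (n : ℕ)

local notation "Rp" => MvPolynomial (Fin n) ℤ_[p]

/-- The augmentation ring hom. -/
def aug : Rp →+* ZMod p :=
  MvPolynomial.eval₂Hom (PadicInt.toZMod (p := p)) (fun _ => 0)

instance zmodModule : Module Rp (ZMod p) := (aug p n).toModule

lemma smul_def (r : Rp) (c : ZMod p) : r • c = aug p n r * c := rfl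

/-- `𝔽_p` as an object of `ModuleCat Rp`. -/
def kk : ModuleCat.{0} Rp := ModuleCat.of Rp (ZMod p)

/-- The regular sequence `p, v_1, …, v_n` as a list. -/
def LL : List Rp := C (p : ℤ_[p]) :: (List.finRange n).map X

lemma LL_length : (LL p n).length = n + 1 := by simp [LL]

lemma mem_X_span (s : Set (Fin n)) (f : Rp) :
    f ∈ Ideal.span (X '' s : Set Rp) ↔
      ∀ m ∈ f.support, ∃ i ∈ s, (m : Fin n →₀ ℕ) i ≠ 0 :=
  MvPolynomial.mem_ideal_span_X_image

lemma sIdeal_map_X (l : List (Fin n)) :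
    sIdeal ((l.map X : List Rp)) = Ideal.span (X '' {i | i ∈ l}) := by
  unfold sIdeal
  congr 1
  ext r
  simp [List.mem_map, Set.mem_image, eq_comm]

lemma regL_map_X (l : List (Fin n)) (hl : l.Nodup) : RegL ((l.map X : List Rp)) := by
  induction l with
  | nil => trivial
  | cons i l ih =>
      obtain ⟨hi, hl'⟩ := List.nodup_cons.mp hl
      refine ⟨?_, ih hl'⟩
      intro r hr
      rw [sIdeal_map_X, mem_X_span] at hr ⊢
      intro m hm
      have hmem : (Finsupp.single i 1 + m) ∈ (X i * r : Rp).support := by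
        rw [MvPolynomial.support_X_mul]
        exact Finset.mem_map_of_mem _ hm
      obtain ⟨j, hj, hjne⟩ := hr _ hmem
      refine ⟨j, hj, ?_⟩
      have hji : j ≠ i := fun h => hi (h ▸ hj)
      simpa [Finsupp.single_apply, hji.symm] using hjne

lemma pPrime_ne_zero : ((p : ℤ_[p]) : ℤ_[p]) ≠ 0 := by
  exact_mod_cast Nat.cast_ne_zero.mpr (Fact.out (p := p.Prime)).ne_zero

lemma regL_LL : RegL (LL p n) := by
  constructor
  · intro r hr
    rw [sIdeal_map_X, mem_X_span] at hr ⊢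
    intro m hm
    have : m ∈ (C (p : ℤ_[p]) * r : Rp).support := by
      rw [MvPolynomial.mem_support_iff, MvPolynomial.coeff_C_mul]
      exact mul_ne_zero (pPrime_ne_zero p) (MvPolynomial.mem_support_iff.mp hm)
    exact hr m this
  · exact regL_map_X p n (List.finRange n) (List.nodup_finRange n)

lemma X_span_le : Ideal.span (X '' {i : Fin n | i ∈ List.finRange n}) ≤ sIdeal (LL p n) := by
  rw [← sIdeal_map_X]
  exact sIdeal_le_cons _ _

lemma mem_sIdeal_LL_iff (f : Rp) : f ∈ sIdeal (LL p n) ↔ aug p n f = 0 := by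
  constructor
  · intro hf
    have hgen : ∀ r ∈ {r : Rp | r ∈ LL p n}, aug p n r = 0 := by
      intro r hr
      simp only [LL, Set.mem_setOf_eq, List.mem_cons, List.mem_map] at hr
      rcases hr with h | ⟨i, _, rfl⟩
      · subst h
        show aug p n (C ((p : ℤ_[p]))) = 0
        rw [show aug p n (C ((p : ℤ_[p]))) = PadicInt.toZMod (p : ℤ_[p]) from
          MvPolynomial.eval₂Hom_C _ _ _]
        rw [map_natCast]
        exact ZMod.natCast_self p
      · exact MvPolynomial.eval₂Hom_X' _ _ _
    have : sIdeal (LL p n) ≤ RingHom.ker (aug p n) := by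
      rw [sIdeal, Ideal.span_le]
      intro r hr
      exact hgen r hr
    exact this hf
  · intro hf
    have hconst : PadicInt.toZMod (constantCoeff f : ℤ_[p]) = 0 := by
      rw [← MvPolynomial.eval₂Hom_zero'_apply]
      exact hf
    have hker : (constantCoeff f : ℤ_[p]) ∈ Ideal.span {(p : ℤ_[p])} := by
      rw [← PadicInt.maximalIdeal_eq_span_p, ← PadicInt.ker_toZMod]
      exact hconst
    obtain ⟨t, ht⟩ := Ideal.mem_span_singleton'.mp hker
    have h1 : (C (constantCoeff f) : Rp) ∈ sIdeal (LL p n) := by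
      have hCp : (C ((p : ℤ_[p])) : Rp) ∈ sIdeal (LL p n) :=
        Ideal.subset_span (by simp [LL])
      have : (C (constantCoeff f) : Rp) = C (t : ℤ_[p]) * C ((p : ℤ_[p])) := by
        rw [← MvPolynomial.C_mul, ht]
      rw [this]
      exact Ideal.mul_mem_left _ _ hCp
    have h2 : f - C (constantCoeff f) ∈ sIdeal (LL p n) := by
      refine X_span_le p n ?_
      rw [mem_X_span]
      intro m hm
      have hm0 : m ≠ 0 := by
        intro h
        rw [MvPolynomial.mem_support_iff, h] at hm
        simp [MvPolynomial.coeff_sub, MvPolynomial.constantCoeff_eq] at hm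
      obtain ⟨i, hi⟩ := Finsupp.ne_iff.mp hm0
      exact ⟨i, by simp, by simpa using hi⟩
    have : f = (f - C (constantCoeff f)) + C (constantCoeff f) := by ring
    rw [this]
    exact add_mem h2 h1

end Specialize

noncomputable section Resolution

open MvPolynomial

variable (p : ℕ) [Fact p.Prime] (n : ℕ)

local notation "Rp" => MvPolynomial (Fin n) ℤ_[p]

/-- The augmentation as an `Rp`-linear map. -/
def augLin : Rp →ₗ[Rp] (ZMod p) where
  toFun := aug p n
  map_add' := map_add _
  map_smul' := fun r s => by
    show aug p n (r * s) = r • (aug p n s)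
    rw [map_mul]
    rfl

/-- The augmentation `K₀ ⟶ k` as a morphism in `ModuleCat Rp`. -/
def pi0 : KM Rp (LL p n) 0 ⟶ kk p n :=
  ModuleCat.ofHom ((augLin p n) ∘ₗ (epsK (LL p n)).toLinearMap)

lemma pi0_surjective : Function.Surjective (pi0 p n) := by
  intro c
  obtain ⟨r, hr⟩ := ZMod.ringHom_surjective (aug p n) c
  exact ⟨(epsK (LL p n)).symm r, by
    show augLin p n (epsK (LL p n) ((epsK (LL p n)).symm r)) = c
    rw [LinearEquiv.apply_symm_apply]
    exact hr⟩

lemma d_pi0 : (KC (LL p n)).d 1 0 ≫ pi0 p n = 0 := by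
  rw [KC_d]
  apply ModuleCat.hom_ext; apply LinearMap.ext
  intro a
  show augLin p n (epsK (LL p n) (dK (LL p n) 0 a)) = 0
  rw [show augLin p n (epsK (LL p n) (dK (LL p n) 0 a))
      = aug p n (epsK (LL p n) (dK (LL p n) 0 a)) from rfl]
  rw [← mem_sIdeal_LL_iff]
  exact epsK_dK_mem _ _

set_option maxHeartbeats 1000000 in
/-- The chain map from the Koszul complex to `𝔽_p`. -/
def piK : KC (LL p n) ⟶ (ChainComplex.single₀ (ModuleCat.{0} Rp)).obj (kk p n) :=
  (ChainComplex.toSingle₀Equiv _ _).symm ⟨pi0 p n, d_pi0 p n⟩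

lemma piK_f_zero : (piK p n).f 0 = pi0 p n :=
  ChainComplex.toSingle₀Equiv_symm_apply_f_zero _ _

set_option maxHeartbeats 1000000 in
lemma quasiIso_piK : QuasiIso (piK p n) := by
  constructor
  intro j
  cases j with
  | zero =>
      rw [ChainComplex.quasiIsoAt₀_iff, ShortComplex.quasiIso_iff_of_zeros']
      · constructor
        · rw [ShortComplex.moduleCat_exact_iff]
          intro b hb
          have hb' : pi0 p n b = 0 := by
            have hb3 : ((piK p n).f 0) b = 0 := hb
            rw [piK_f_zero] at hb3
            exact hb3
          have : epsK (LL p n) b ∈ sIdeal (LL p n) := by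
            rw [mem_sIdeal_LL_iff]
            exact hb'
          obtain ⟨a, ha⟩ := exists_dK_of_mem _ _ this
          refine ⟨a, ?_⟩
          show (KC (LL p n)).d 1 0 a = b
          rw [KC_d]
          exact ha
        · have he : Epi ((piK p n).f 0) := by
            rw [ModuleCat.epi_iff_surjective, piK_f_zero]
            exact pi0_surjective p n
          exact he
      all_goals rfl
  | succ j =>
      rw [quasiIsoAt_iff_exactAt']
      · exact KC_exactAt _ (regL_LL p n) j
      · apply ChainComplex.exactAt_succ_single_obj

set_option maxHeartbeats 1000000 in
/-- The Koszul resolution of `𝔽_p` over `Rp`. -/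
def koszulRes : ProjectiveResolution (kk p n) where
  complex := KC (LL p n)
  projective := fun j => projectiveKM _ _
  π := piK p n
  quasiIso := quasiIso_piK p n

end Resolution

noncomputable section TorCompute

open MvPolynomial

variable (p : ℕ) [Fact p.Prime] (n : ℕ)

local notation "Rp" => MvPolynomial (Fin n) ℤ_[p]

/-- The functor `k ⊗ -`. -/
abbrev FF : ModuleCat.{0} Rp ⥤ ModuleCat.{0} Rp :=
  (CategoryTheory.MonoidalCategory.tensoringLeft (ModuleCat.{0} Rp)).obj (kk p n)

lemma tmul_eq_zero {N : Type} [AddCommGroup N] [Module Rp N] (c : ZMod p) (y : N)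
    (hy : y ∈ (RingHom.ker (aug p n)) • (⊤ : Submodule Rp N)) :
    (c ⊗ₜ[Rp] y : TensorProduct Rp (ZMod p) N) = 0 := by
  refine Submodule.smul_induction_on hy (fun r hr x _ => ?_) (fun a b ha hb => ?_)
  · rw [TensorProduct.tmul_smul, TensorProduct.smul_tmul', show r • c = aug p n r * c from rfl,
      show aug p n r = 0 from hr, zero_mul, TensorProduct.zero_tmul]
  · rw [TensorProduct.tmul_add, ha, hb, add_zero]

lemma FF_map_eq_zero {M N : ModuleCat.{0} Rp} (f : M ⟶ N)
    (hf : ∀ m : M, f m ∈ (RingHom.ker (aug p n)) • (⊤ : Submodule Rp N)) :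
    (FF p n).map f = 0 := by
  apply ModuleCat.hom_ext
  show LinearMap.lTensor (kk p n) f.hom =
    (0 : TensorProduct Rp (ZMod p) M →ₗ[Rp] TensorProduct Rp (ZMod p) N)
  apply TensorProduct.ext'
  intro c m
  rw [LinearMap.lTensor_tmul]
  exact tmul_eq_zero p n c (f m) (hf m)

/-- The tensored Koszul complex. -/
def TCx : ChainComplex (ModuleCat.{0} Rp) ℕ :=
  ((FF p n).mapHomologicalComplex (ComplexShape.down ℕ)).obj (KC (LL p n))

lemma LL_subset_ker : ∀ x ∈ LL p n, x ∈ RingHom.ker (aug p n) := by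
  intro x hx
  have : x ∈ sIdeal (LL p n) := Ideal.subset_span hx
  exact (mem_sIdeal_LL_iff p n x).mp this

lemma TC_d_eq_zero (i j : ℕ) : (TCx p n).d i j = 0 := by
  by_cases h : j + 1 = i
  · subst h
    show (FF p n).map ((KC (LL p n)).d (j+1) j) = 0
    rw [KC_d]
    exact FF_map_eq_zero p n _ (dK_mem_smul _ _ (LL_subset_ker p n) j)
  · show (FF p n).map ((KC (LL p n)).d i j) = 0
    rw [HomologicalComplex.shape _ _ _ h, Functor.map_zero]

/-- homology of the tensored complex is just its terms -/
def TChomologyIso (j : ℕ) : (TCx p n).homology j ≅ (TCx p n).X j :=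
  (ShortComplex.LeftHomologyData.ofZeros ((TCx p n).sc j)
    (TC_d_eq_zero p n _ _) (TC_d_eq_zero p n _ _)).homologyIso

/-- The Tor group as tensored Koszul term. -/
def torIso (j : ℕ) :
    ((Tor (ModuleCat.{0} Rp) j).obj (kk p n)).obj (kk p n) ≅ (TCx p n).X j :=
  (koszulRes p n).isoLeftDerivedObj (FF p n) j ≪≫ TChomologyIso p n j

lemma cardT : ∀ (xs : List Rp) (j : ℕ),
    Nat.card (TensorProduct Rp (ZMod p) (KM Rp xs j)) = p ^ (xs.length.choose j)
  | [], 0 => by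
      have e : TensorProduct Rp (ZMod p) (KM Rp ([] : List Rp) 0) ≃ₗ[Rp] (ZMod p) :=
        TensorProduct.rid Rp (ZMod p)
      rw [Nat.card_congr e.toEquiv]
      simp [Nat.card_zmod]
  | [], j+1 => by
      haveI : Subsingleton (KM Rp ([] : List Rp) (j+1) : Type 0) := ⟨fun a b => rfl⟩
      haveI : Unique (TensorProduct Rp (ZMod p) (KM Rp ([] : List Rp) (j+1))) :=
        TensorProduct.uniqueRight
      rw [Nat.card_unique]
      simp
  | x::xs, 0 => by
      have := cardT xs 0
      rw [Nat.choose_zero_right] at this ⊢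
      exact this
  | x::xs, j+1 => by
      have e : TensorProduct Rp (ZMod p) (KM Rp (x::xs) (j+1)) ≃ₗ[Rp]
          (TensorProduct Rp (ZMod p) (KM Rp xs (j+1)) × TensorProduct Rp (ZMod p) (KM Rp xs j)) :=
        TensorProduct.prodRight Rp Rp (ZMod p) (KM Rp xs (j+1)) (KM Rp xs j)
      rw [Nat.card_congr e.toEquiv, Nat.card_prod, cardT xs (j+1), cardT xs j]
      rw [List.length_cons, Nat.choose_succ_succ, pow_add, mul_comm]

end TorCompute

noncomputable section Final

open MvPolynomial

variable (p : ℕ) [Fact p.Prime] (n : ℕ)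

local notation "Rp" => MvPolynomial (Fin n) ℤ_[p]

lemma cardTCX (j : ℕ) : Nat.card ((TCx p n).X j : Type) = p ^ ((n+1).choose j) := by
  have h := cardT p n (LL p n) j
  rw [LL_length] at h
  exact h

lemma subsingletonTCX (j : ℕ) (hj : n + 1 < j) : Subsingleton ((TCx p n).X j : Type) := by
  haveI : Subsingleton (KM Rp (LL p n) j : Type) := by
    refine subsingletonKM _ _ ?_
    rw [LL_length]
    exact hj
  haveI : Unique (TensorProduct Rp (ZMod p) (KM Rp (LL p n) j)) := TensorProduct.uniqueRight
  exact inferInstanceAs (Subsingleton (TensorProduct Rp (ZMod p) (KM Rp (LL p n) j)))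

theorem stmt_main (j : ℕ) :
    Nat.card (((Tor (ModuleCat.{0} Rp) j).obj (kk p n)).obj (kk p n)) = p ^ (n + 1).choose j ∧
    (n + 1 < j → Subsingleton (((Tor (ModuleCat.{0} Rp) j).obj (kk p n)).obj (kk p n))) := by
  have e := (forget (ModuleCat.{0} Rp)).mapIso (torIso p n j)
  constructor
  · refine Eq.trans (Nat.card_congr (α := (((Tor (ModuleCat.{0} Rp) j).obj
        (kk p n)).obj (kk p n) : Type)) (β := ((TCx p n).X j : Type)) e.toEquiv) ?_
    exact cardTCX p n j
  · intro hj
    haveI := subsingletonTCX p n j hj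
    exact Equiv.subsingleton (α := (((Tor (ModuleCat.{0} Rp) j).obj
        (kk p n)).obj (kk p n) : Type)) (β := ((TCx p n).X j : Type)) e.toEquiv

end Final

/-- For `R = ℤ_p[v_1, …, v_n]` and `k = 𝔽_p` an `R`-module via the augmentation,
`Tor_j^R(k, k)` has cardinality `p ^ (binom (n+1) j)`; in particular it is trivial
for `j > n + 1`. -/
theorem stmt_2 (p : ℕ) [Fact p.Prime] (n : ℕ) (hn : 1 ≤ n) (j : ℕ) :
    letI : Module (MvPolynomial (Fin n) ℤ_[p]) (ZMod p) :=
      (MvPolynomial.eval₂Hom (PadicInt.toZMod (p := p)) (fun _ => 0)).toModule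
    Nat.card
        (((Tor (ModuleCat (MvPolynomial (Fin n) ℤ_[p])) j).obj
          (ModuleCat.of _ (ZMod p))).obj (ModuleCat.of _ (ZMod p))) =
      p ^ (n + 1).choose j ∧
    (n + 1 < j →
      Subsingleton
        (((Tor (ModuleCat (MvPolynomial (Fin n) ℤ_[p])) j).obj
          (ModuleCat.of _ (ZMod p))).obj (ModuleCat.of _ (ZMod p)))) := by
  exact ⟨(stmt_main p n j).1, (stmt_main p n j).2⟩
end
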